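/- Fix integers n ≥ 1, ω ≥ 1 and 1 ≤ k ≤ n. For a tuple ℓ = (ℓ_j)_{j∈ℤ/nℤ} of integers with 0 ≤ ℓ_j ≤ ωn, the following are equivalent: (1) for every i ∈ ℤ/nℤ, Σ_{j ∈ ℤ/nℤ} #{s ∈ {1,…,ℓ_j} : j + s ≡ i (mod n)} = kω; (2) Σ_{j ∈ ℤ/nℤ} ℓ_j = kωn and the map ℤ/nℤ → ℤ/nℤ, j ↦ j + ℓ_j (mod n), is a bijection. In other words, D(k,n,ω) = C(k,n,ω). -/
import Mathlib


open Finset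




private lemma Dtuples_step_aux {n : ℕ} [NeZero n] (j i : ZMod n) (L : ℕ) :
    ((Finset.Icc 1 L).filter fun s : ℕ => j + (s : ZMod n) = i + 1).card
      + (if 1 ≤ L ∧ j + (L : ZMod n) = i then 1 else 0)
    = ((Finset.Icc 1 L).filter fun s : ℕ => j + (s : ZMod n) = i).card
      + (if 1 ≤ L ∧ j = i then 1 else 0) := by
  induction L with
  | zero => simp
  | succ L ih =>
    rw [Finset.card_filter, Finset.card_filter] at ih ⊢
    rw [Finset.sum_Icc_succ_top (by omega), Finset.sum_Icc_succ_top (by omega)]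
    have h1 : (j + ((L+1 : ℕ) : ZMod n) = i + 1) ↔ (j + (L : ZMod n) = i) := by
      push_cast; rw [← add_assoc, add_left_inj]
    simp only [h1, (by omega : 1 ≤ L + 1) , true_and]
    by_cases hL : 1 ≤ L
    · have ih' : ((∑ s ∈ Finset.Icc 1 L, if j + (s : ZMod n) = i + 1 then 1 else 0)
          + if j + (L : ZMod n) = i then 1 else 0)
        = (∑ s ∈ Finset.Icc 1 L, if j + (s : ZMod n) = i then 1 else 0)
          + if j = i then 1 else 0 := by simpa [hL] using ih
      split_ifs at ih' ⊢ <;> omega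
    · have hL0 : L = 0 := by omega
      subst hL0
      simp only [Finset.Icc_eq_empty (by omega : ¬ (1:ℕ) ≤ 0), Finset.sum_empty, zero_add,
        Nat.cast_zero, add_zero, Nat.cast_one] at *
      split_ifs at * <;> omega

section MainAux
variable {n : ℕ} [NeZero n] (ℓ : ZMod n → ℕ)

private def Ffun (i : ZMod n) : ℕ :=
  ∑ j : ZMod n, ((Finset.Icc 1 (ℓ j)).filter fun s : ℕ => j + (s : ZMod n) = i).card

private lemma Ffun_total : ∑ i : ZMod n, Ffun ℓ i = ∑ j : ZMod n, ℓ j := by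
  unfold Ffun
  rw [Finset.sum_comm]
  refine Finset.sum_congr rfl fun j _ => ?_
  have := Finset.card_eq_sum_card_fiberwise
    (f := fun s : ℕ => j + (s : ZMod n)) (s := Finset.Icc 1 (ℓ j)) (t := Finset.univ)
    (fun x _ => Finset.mem_univ _)
  rw [← this, Nat.card_Icc]
  omega

private lemma Ffun_step (i : ZMod n) :
    Ffun ℓ (i + 1) + (∑ j : ZMod n, if 1 ≤ ℓ j ∧ j + (ℓ j : ZMod n) = i then 1 else 0)
      = Ffun ℓ i + (if 1 ≤ ℓ i then 1 else 0) := by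
  unfold Ffun
  rw [← Finset.sum_add_distrib]
  have h1 : ∀ j : ZMod n,
      ((Finset.Icc 1 (ℓ j)).filter fun s : ℕ => j + (s : ZMod n) = i + 1).card
        + (if 1 ≤ ℓ j ∧ j + (ℓ j : ZMod n) = i then 1 else 0)
      = ((Finset.Icc 1 (ℓ j)).filter fun s : ℕ => j + (s : ZMod n) = i).card
        + (if 1 ≤ ℓ j ∧ j = i then 1 else 0) :=
    fun j => Dtuples_step_aux j i (ℓ j)
  rw [Finset.sum_congr rfl fun j _ => h1 j, Finset.sum_add_distrib]
  congr 1
  rw [Finset.sum_eq_single_of_mem i (Finset.mem_univ i)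
    (fun b _ hb => by simp [hb])]
  simp

end MainAux


section MainAux2
variable {n : ℕ} [NeZero n] (ℓ : ZMod n → ℕ)

private lemma fiber_card (i : ZMod n) :
    (Finset.univ.filter fun j : ZMod n => j + (ℓ j : ZMod n) = i).card
      = (∑ j : ZMod n, if 1 ≤ ℓ j ∧ j + (ℓ j : ZMod n) = i then 1 else 0)
        + (if ℓ i = 0 then 1 else 0) := by
  rw [Finset.card_filter]
  have h1 : ∀ j : ZMod n, (if j + (ℓ j : ZMod n) = i then 1 else 0)
      = (if 1 ≤ ℓ j ∧ j + (ℓ j : ZMod n) = i then 1 else 0)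
        + (if ℓ j = 0 ∧ j = i then (1:ℕ) else 0) := by
    intro j
    by_cases h0 : ℓ j = 0
    · have : (ℓ j : ZMod n) = 0 := by rw [h0]; exact Nat.cast_zero
      simp [h0, this]
    · simp [h0, Nat.one_le_iff_ne_zero]
  rw [Finset.sum_congr rfl fun j _ => h1 j, Finset.sum_add_distrib]
  congr 1
  rw [Finset.sum_eq_single_of_mem i (Finset.mem_univ i) (fun b _ hb => by simp [hb])]
  simp

end MainAux2


/-- For a length tuple `ℓ : ℤ/nℤ → ℕ` with `ℓ j ≤ ωn` for all `j`, the
dimension-vector condition defining `D(k,n,ω)` is equivalent to the pair of conditions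
defining `C(k,n,ω)`: the total sum is `kωn` and `j ↦ j + ℓ j (mod n)` is a bijection
of `ℤ/nℤ`. In other words, `D(k,n,ω) = C(k,n,ω)`. -/
theorem Dtuples_eq_Ctuples
    (n ω k : ℕ) [NeZero n] (hω : 1 ≤ ω) (hk : 1 ≤ k) (hkn : k ≤ n)
    (ℓ : ZMod n → ℕ) (hbound : ∀ j, ℓ j ≤ ω * n) :
    (∀ i : ZMod n,
        (∑ j : ZMod n,
          ((Finset.Icc 1 (ℓ j)).filter fun s : ℕ => j + (s : ZMod n) = i).card) = k * ω) ↔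
      ((∑ j : ZMod n, ℓ j) = k * ω * n ∧
        Function.Bijective fun j : ZMod n => j + (ℓ j : ZMod n)) := by
  have hcard : Fintype.card (ZMod n) = n := ZMod.card n
  constructor
  · intro h
    have hF : ∀ i : ZMod n, Ffun ℓ i = k * ω := h
    constructor
    · have := Ffun_total ℓ
      rw [← this]
      calc ∑ i : ZMod n, Ffun ℓ i = ∑ _i : ZMod n, k * ω := Finset.sum_congr rfl fun i _ => hF i
        _ = n * (k * ω) := by rw [Finset.sum_const, Finset.card_univ, hcard, smul_eq_mul]
        _ = k * ω * n := by ring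
    · have hN : ∀ i : ZMod n,
          (∑ j : ZMod n, if 1 ≤ ℓ j ∧ j + (ℓ j : ZMod n) = i then 1 else 0)
            = (if 1 ≤ ℓ i then 1 else 0) := by
        intro i
        have := Ffun_step ℓ i
        rw [hF i, hF (i + 1)] at this
        omega
      have hfib : ∀ i : ZMod n,
          (Finset.univ.filter fun j : ZMod n => j + (ℓ j : ZMod n) = i).card = 1 := by
        intro i
        rw [fiber_card ℓ i, hN i]
        split_ifs <;> omega
      rw [← Finite.injective_iff_bijective]
      intro a b hab
      have ha : a ∈ Finset.univ.filter fun j : ZMod n => j + (ℓ j : ZMod n) = a + (ℓ a : ZMod n) := by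
        simp
      have hb : b ∈ Finset.univ.filter fun j : ZMod n => j + (ℓ j : ZMod n) = a + (ℓ a : ZMod n) := by
        simp only [Finset.mem_filter, Finset.mem_univ, true_and]
        exact hab.symm
      exact Finset.card_le_one.mp (le_of_eq (hfib _)) a ha b hb
  · rintro ⟨hsum, hbij⟩
    have hfib : ∀ i : ZMod n,
        (Finset.univ.filter fun j : ZMod n => j + (ℓ j : ZMod n) = i).card = 1 := by
      intro i
      obtain ⟨a, ha, hu⟩ := (Function.bijective_iff_existsUnique _).mp hbij i
      rw [Finset.card_eq_one]
      refine ⟨a, ?_⟩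
      ext x
      simp only [Finset.mem_filter, Finset.mem_univ, true_and, Finset.mem_singleton]
      exact ⟨fun hx => hu x hx, fun hx => hx ▸ ha⟩
    have hN : ∀ i : ZMod n,
        (∑ j : ZMod n, if 1 ≤ ℓ j ∧ j + (ℓ j : ZMod n) = i then 1 else 0)
          = (if 1 ≤ ℓ i then 1 else 0) := by
      intro i
      have := (fiber_card ℓ i).symm.trans (hfib i)
      split_ifs at this ⊢ <;> omega
    have hstep : ∀ i : ZMod n, Ffun ℓ (i + 1) = Ffun ℓ i := by
      intro i
      have := Ffun_step ℓ i
      rw [hN i] at this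
      omega
    have hconstN : ∀ m : ℕ, Ffun ℓ (m : ZMod n) = Ffun ℓ 0 := by
      intro m
      induction m with
      | zero => simp
      | succ m ih =>
        have : ((m + 1 : ℕ) : ZMod n) = (m : ZMod n) + 1 := by push_cast; ring
        rw [this, hstep, ih]
    have hconst : ∀ i : ZMod n, Ffun ℓ i = Ffun ℓ 0 := by
      intro i
      obtain ⟨m, rfl⟩ := ZMod.natCast_zmod_surjective i
      exact hconstN m
    have htot : n * Ffun ℓ 0 = k * ω * n := by
      rw [← hsum, ← Ffun_total ℓ]
      have : ∑ i : ZMod n, Ffun ℓ i = ∑ _i : ZMod n, Ffun ℓ 0 :=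
        Finset.sum_congr rfl fun i _ => hconst i
      rw [this, Finset.sum_const, Finset.card_univ, hcard, smul_eq_mul]
    have hn : 0 < n := Nat.pos_of_ne_zero (NeZero.ne n)
    have hF0 : Ffun ℓ 0 = k * ω := by
      have : Ffun ℓ 0 * n = k * ω * n := by rw [← htot]; ring
      exact Nat.eq_of_mul_eq_mul_right hn this
    intro i
    exact (hconst i).trans hF0
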